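/- In the Fock-Fischer space on C^n, the norm of the polynomial z ↦ (zz^t)^k computed in coordinates w_i = √2 z_i equals ‖(zz^t)^k‖²_F = k! (n/2)_k. -/

import Mathlib

open MvPolynomial

/-- The differential operator `∂^α` acting on polynomials. -/
noncomputable def Dpow {n : ℕ} (α : Fin n →₀ ℕ) (p : MvPolynomial (Fin n) ℂ) :
    MvPolynomial (Fin n) ℂ :=
  (Finset.univ : Finset (Fin n)).toList.foldr (fun i q => (fun r => pderiv i r)^[α i] q) p

/-- The Fock-Fischer inner product `⟨p,q⟩ = p(∂)(q^*)|_{w=0}`, where `q^*` has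
conjugated coefficients. -/
noncomputable def fockInner {n : ℕ} (p q : MvPolynomial (Fin n) ℂ) : ℂ :=
  constantCoeff (∑ α ∈ p.support, p.coeff α • Dpow α (MvPolynomial.map (starRingEnd ℂ) q))

namespace FockAux

variable {n : ℕ}

abbrev Pol (n : ℕ) := MvPolynomial (Fin n) ℂ

/-- `∂/∂wᵢ` as a linear endomorphism. -/
noncomputable def del (i : Fin n) : Module.End ℂ (Pol n) := (pderiv i).toLinearMap

lemma pderiv_swap (i j : Fin n) (p : Pol n) :
    pderiv i (pderiv j p) = pderiv j (pderiv i p) := by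
  induction p using MvPolynomial.induction_on' with
  | monomial s a =>
      rcases eq_or_ne i j with rfl | hij
      · rfl
      · simp only [pderiv_monomial]
        have h1 : ((s - Finsupp.single j 1 : Fin n →₀ ℕ)) i = s i := by
          simp [Finsupp.single_apply, Ne.symm hij]
        have h2 : ((s - Finsupp.single i 1 : Fin n →₀ ℕ)) j = s j := by
          simp [Finsupp.single_apply, hij]
        rw [h1, h2, tsub_right_comm, mul_right_comm]
  | add p q hp hq => simp [hp, hq]

lemma del_mul_comm (i j : Fin n) : del i * del j = del j * del i :=
  LinearMap.ext fun p => pderiv_swap i j p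

/-- The (commutative) subalgebra of `End` generated by the `∂ᵢ`. -/
noncomputable def adj (n : ℕ) : Subalgebra ℂ (Module.End ℂ (Pol n)) :=
  Algebra.adjoin ℂ (Set.range (del (n := n)))

instance : IsMulCommutative (adj n) :=
  Algebra.isMulCommutative_adjoin ℂ (by
    rintro a ⟨i, rfl⟩ b ⟨j, rfl⟩
    exact del_mul_comm i j)

open scoped IsMulCommutative

noncomputable def D (i : Fin n) : adj n :=
  ⟨del i, Algebra.subset_adjoin ⟨i, rfl⟩⟩

/-- The substitution homomorphism `p ↦ p(∂)`. -/
noncomputable def Phi (n : ℕ) : MvPolynomial (Fin n) ℂ →ₐ[ℂ] Module.End ℂ (Pol n) :=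
  (adj n).val.comp (aeval (D (n := n)))

lemma list_prod_apply (l : List (Fin n)) (f : Fin n → Module.End ℂ (Pol n)) (r : Pol n) :
    ((l.map f).prod) r = l.foldr (fun i t => f i t) r := by
  induction l with
  | nil => rfl
  | cons a l ih => simp [Module.End.mul_apply, ih]

lemma del_pow_apply (i : Fin n) (k : ℕ) (r : Pol n) :
    (del i ^ k) r = (fun r => pderiv i r)^[k] r := by
  rw [Module.End.pow_apply]
  rfl

lemma Dpow_eq (α : Fin n →₀ ℕ) (r : Pol n) :
    Dpow α r = (((Finset.univ : Finset (Fin n)).toList.map (fun i => del i ^ α i)).prod) r := by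
  rw [list_prod_apply]
  unfold Dpow
  congr 1
  funext i q
  rw [del_pow_apply]

lemma val_list_prod (l : List (Fin n)) (g : Fin n → adj n) :
    (((l.map g).prod : adj n) : Module.End ℂ (Pol n))
      = (l.map (fun i => ((g i : Module.End ℂ (Pol n))))).prod := by
  induction l with
  | nil => simp
  | cons a l ih => simp [ih]

lemma Phi_monomial_apply (s : Fin n →₀ ℕ) (a : ℂ) (r : Pol n) :
    Phi n (monomial s a) r = a • Dpow s r := by
  have h0 : Phi n (monomial s a) = (adj n).val (aeval (D (n := n)) (monomial s a)) := rfl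
  have h2 : (aeval (D (n := n)) (monomial s a))
      = algebraMap ℂ (adj n) a * ((Finset.univ : Finset (Fin n)).toList.map
          (fun i => D i ^ s i)).prod := by
    rw [aeval_monomial, Finsupp.prod_pow, Finset.prod_map_toList]
  rw [h0, h2, map_mul, AlgHom.commutes]
  have h3 : ((adj n).val (((Finset.univ : Finset (Fin n)).toList.map
        (fun i => D i ^ s i)).prod) : Module.End ℂ (Pol n))
      = (((Finset.univ : Finset (Fin n)).toList.map (fun i => del i ^ s i)).prod) := by
    have := val_list_prod (n := n) (Finset.univ : Finset (Fin n)).toList (fun i => D i ^ s i)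
    rw [Subalgebra.coe_val, this]
    simp [D]
  rw [h3, Module.End.mul_apply, Module.algebraMap_end_apply, Dpow_eq]

lemma Phi_apply (p r : Pol n) :
    Phi n p r = ∑ α ∈ p.support, p.coeff α • Dpow α r := by
  conv_lhs => rw [as_sum p, map_sum, LinearMap.sum_apply]
  exact Finset.sum_congr rfl fun α _ => Phi_monomial_apply α _ r

lemma fockInner_eq (p q : Pol n) :
    fockInner p q = constantCoeff (Phi n p (MvPolynomial.map (starRingEnd ℂ) q)) := by
  rw [fockInner, Phi_apply]

/-- The polynomial `q(w) = w₁² + ⋯ + wₙ²`. -/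
noncomputable def Q (n : ℕ) : Pol n := ∑ i : Fin n, (X i : Pol n) ^ 2

/-- The Laplacian. -/
noncomputable def Δ (n : ℕ) : Module.End ℂ (Pol n) := ∑ i : Fin n, del i ^ 2

lemma Phi_Q : Phi n (Q n) = Δ n := by
  simp only [Q, Δ, map_sum, map_pow]
  refine Finset.sum_congr rfl fun i _ => ?_
  congr 1
  simp [Phi, D]

lemma Delta_apply (p : Pol n) :
    Δ n p = ∑ i : Fin n, pderiv i (pderiv i p) := by
  simp only [Δ, LinearMap.sum_apply]
  refine Finset.sum_congr rfl fun i _ => ?_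
  rw [sq, Module.End.mul_apply]
  rfl

lemma pderiv_Q (i : Fin n) : pderiv i (Q n) = 2 * X i := by
  rw [Q, map_sum]
  rw [Finset.sum_eq_single i]
  · rw [pderiv_pow, pderiv_X_self]
    norm_num
  · intro j _ hji
    simp [pderiv_pow, pderiv_X_of_ne hji]
  · simp

lemma natCast_mul_pow_pred_mul (t : ℕ) :
    (t : Pol n) * Q n ^ (t - 1) * Q n = (t : Pol n) * Q n ^ t := by
  cases t with
  | zero => simp
  | succ s =>
      have h : s + 1 - 1 = s := rfl
      rw [h, mul_assoc, ← pow_succ]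

lemma Delta_Q_pow (t : ℕ) :
    Δ n (Q n ^ (t + 1)) = ((2 * (t + 1) * (2 * t + n) : ℂ)) • Q n ^ t := by
  rw [Delta_apply]
  have hq : ∀ i : Fin n, pderiv i (Q n ^ (t + 1))
      = ((t : Pol n) + 1) * Q n ^ t * (2 * X i) := by
    intro i
    rw [pderiv_pow, pderiv_Q, Nat.add_sub_cancel]
    push_cast
    ring
  have key : ∀ i : Fin n, pderiv i (pderiv i (Q n ^ (t + 1)))
      = ((t : Pol n) + 1) * (((t : Pol n) * Q n ^ (t - 1) * (2 * X i)) * (2 * X i)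
          + Q n ^ t * 2) := by
    intro i
    rw [hq i, pderiv_mul, pderiv_mul]
    have h1 : pderiv i ((t : Pol n) + 1) = 0 := by
      have hC : ((t : Pol n) + 1) = C ((t : ℂ) + 1) := by
        rw [map_add, map_one, map_natCast]
      rw [hC, pderiv_C]
    have h2 : pderiv i (Q n ^ t) = (t : Pol n) * Q n ^ (t - 1) * (2 * X i) := by
      rw [pderiv_pow, pderiv_Q]
    have h20 : pderiv i (2 : Pol n) = 0 := by
      rw [← map_ofNat (C : ℂ →+* Pol n) 2, pderiv_C]
    have h3 : pderiv i ((2 : Pol n) * X i) = 2 := by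
      rw [pderiv_mul, h20, pderiv_X_self]
      ring
    rw [h1, h2, h3]
    ring
  rw [Finset.sum_congr rfl fun i _ => key i, ← Finset.mul_sum]
  have expand : (∑ i : Fin n, (((t : Pol n) * Q n ^ (t - 1) * (2 * X i)) * (2 * X i)
          + Q n ^ t * 2))
      = ((t : Pol n) * Q n ^ (t - 1) * Q n) * 4 + (n : Pol n) * (Q n ^ t * 2) := by
    rw [Finset.sum_add_distrib, Finset.sum_const, Finset.card_univ, Fintype.card_fin,
      nsmul_eq_mul]
    congr 1
    rw [Q, Finset.mul_sum, Finset.sum_mul]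
    exact Finset.sum_congr rfl fun i _ => by ring
  rw [expand, natCast_mul_pow_pred_mul, smul_eq_C_mul]
  simp only [map_mul, map_add, map_ofNat, map_natCast, map_one]
  ring

lemma Delta_pow_Q_pow (k : ℕ) :
    (Δ n ^ k) (Q n ^ k)
      = (∏ m ∈ Finset.range k, (2 * (m + 1) * (2 * m + n) : ℂ)) • (1 : Pol n) := by
  induction k with
  | zero => simp
  | succ k ih =>
      rw [pow_succ, Module.End.mul_apply, Delta_Q_pow, map_smul, ih,
        Finset.prod_range_succ, smul_smul]
      congr 1
      ring

lemma map_conj_Q_pow (k : ℕ) :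
    MvPolynomial.map (starRingEnd ℂ) (Q n ^ k) = Q n ^ k := by
  rw [map_pow]
  congr 1
  rw [Q, map_sum]
  refine Finset.sum_congr rfl fun i _ => ?_
  rw [map_pow, map_X]

lemma ascPochhammer_eval_prod (k : ℕ) (x : ℂ) :
    (ascPochhammer ℂ k).eval x = ∏ m ∈ Finset.range k, (x + m) := by
  induction k with
  | zero => simp
  | succ k ih => rw [ascPochhammer_succ_eval, ih, Finset.prod_range_succ]

lemma constantCoeff_smul_one (a : ℂ) :
    constantCoeff (a • (1 : Pol n)) = a := by
  rw [smul_eq_C_mul, mul_one, constantCoeff_C]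

end FockAux

open FockAux in
/-- In `w`-coordinates `wᵢ = √2 zᵢ`, the polynomial `(zz^t)^k = 2^{-k} (ww^t)^k` has
Fock-Fischer squared norm `k! (n/2)_k`. -/
theorem fock_norm_sq_q_pow (n k : ℕ) :
    fockInner (((2 : ℂ)⁻¹) ^ k • (∑ i : Fin n, (X i : MvPolynomial (Fin n) ℂ) ^ 2) ^ k)
        (((2 : ℂ)⁻¹) ^ k • (∑ i : Fin n, (X i : MvPolynomial (Fin n) ℂ) ^ 2) ^ k)
    = (k.factorial : ℂ) * (ascPochhammer ℂ k).eval ((n : ℂ) / 2) := by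
  have hQ : (∑ i : Fin n, (X i : MvPolynomial (Fin n) ℂ) ^ 2) = Q n := rfl
  rw [hQ, fockInner_eq]
  set c : ℂ := ((2 : ℂ)⁻¹) ^ k with hc
  have hcr : (starRingEnd ℂ) c = c := by
    rw [hc, map_pow, map_inv₀]
    norm_num [Complex.conj_ofNat]
  have hconj : MvPolynomial.map (starRingEnd ℂ) (c • Q n ^ k) = c • Q n ^ k := by
    rw [smul_eq_C_mul, map_mul, map_C, hcr, map_conj_Q_pow, ← smul_eq_C_mul]
  have hPhi : Phi n (c • Q n ^ k) = c • (Δ n ^ k) := by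
    rw [map_smul, map_pow, Phi_Q]
  have hlin : (Δ n ^ k) (c • Q n ^ k) = c • (Δ n ^ k) (Q n ^ k) := map_smul _ c _
  rw [hconj, hPhi, LinearMap.smul_apply, hlin, Delta_pow_Q_pow, smul_smul, smul_smul,
    constantCoeff_smul_one]
  have hfact : (k.factorial : ℂ) = ∏ m ∈ Finset.range k, ((m : ℂ) + 1) := by
    rw [← Finset.prod_range_add_one_eq_factorial]
    push_cast
    ring
  rw [hfact, ascPochhammer_eval_prod, ← Finset.prod_mul_distrib]
  have hck : c * c = ∏ _m ∈ Finset.range k, (4 : ℂ)⁻¹ := by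
    rw [Finset.prod_const, Finset.card_range, hc, ← mul_pow]
    norm_num
  rw [hck, ← Finset.prod_mul_distrib]
  refine Finset.prod_congr rfl fun m _ => ?_
  field_simp
  ring
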